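/- Let 1<α≤2 and λ∈ℝ with E_{α,α−1}(λ)≠0, and let G be the associated Green's function. Then (i) G is continuous on I×[0,1), where I=[0,1]; and (ii) G(0,s)=0 for all s∈[0,1), G(t,0)=0 for all t∈I, and the partial derivative ∂G(t,s)/∂t evaluated at t=1 equals 0 for every s∈[0,1). -/

import Mathlib

/-- The two-parameter Mittag-Leffler function `E_{α,β}(x) = ∑_{k=0}^∞ x^k / Γ(αk+β)`. -/
noncomputable def ML (α β x : ℝ) : ℝ := ∑' k : ℕ, x ^ k / Real.Gamma (α * k + β)

/-- The Green's function of the mixed problem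
`D^α u - λ u + y = 0`, `lim_{t→0⁺} t^{2-α}u(t) = 0`, `u'(1) = 0`. -/
noncomputable def greenG (α lam : ℝ) (t s : ℝ) : ℝ :=
  if s ≤ t then
    t ^ (α - 1) * ML α α (lam * t ^ α) * ML α (α - 1) (lam * (1 - s) ^ α) /
      ((1 - s) ^ (2 - α) * ML α (α - 1) lam) -
    (t - s) ^ (α - 1) * ML α α (lam * (t - s) ^ α)
  else
    t ^ (α - 1) * ML α α (lam * t ^ α) * ML α (α - 1) (lam * (1 - s) ^ α) /
      ((1 - s) ^ (2 - α) * ML α (α - 1) lam)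


open Real Filter Set Topology

lemma summable_aux {a b : ℝ} (ha : 1 ≤ a) (hb : 0 < b) {C : ℝ} (hC : 0 ≤ C) :
    Summable (fun n : ℕ => C ^ n / Real.Gamma (a * n + b)) := by
  have hΓpos : ∀ n : ℕ, 0 < Real.Gamma (a * n + b) := by
    intro n
    have h1 : (0:ℝ) ≤ a * n := by positivity
    exact Real.Gamma_pos_of_pos (by linarith)
  refine summable_of_ratio_norm_eventually_le (r := 1/2) (by norm_num) ?_
  filter_upwards [eventually_ge_atTop ⌈2*C+2⌉₊] with n hn
  have hn' : (⌈2*C+2⌉₊ : ℝ) ≤ n := Nat.cast_le.mpr hn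
  have hceil := Nat.le_ceil (2*C+2)
  have hnn : (0:ℝ) ≤ n := Nat.cast_nonneg n
  set x := a * n + b with hx
  have hxge : 2*C+2 ≤ x := by rw [hx]; nlinarith
  have hx0 : 0 < x := by linarith
  have key : Real.Gamma (x + 1) ≤ Real.Gamma (x + a) := by
    rcases eq_or_lt_of_le ha with h | h
    · rw [← h]
    · exact Real.Gamma_strictMonoOn_Ici.monotoneOn (by simp only [mem_Ici]; linarith)
        (by simp only [mem_Ici]; linarith) (by linarith)
  have hG1 : Real.Gamma (x+1) = x * Real.Gamma x := Real.Gamma_add_one hx0.ne'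
  have hpos1 : 0 < Real.Gamma (x + a) := Real.Gamma_pos_of_pos (by linarith)
  have hposx : 0 < Real.Gamma x := hΓpos n
  have hCn : (0:ℝ) ≤ C ^ n := pow_nonneg hC n
  have e1 : a * ((n+1:ℕ):ℝ) + b = x + a := by push_cast; rw [hx]; ring
  rw [e1, Real.norm_eq_abs, Real.norm_eq_abs, abs_div, abs_div,
    abs_of_nonneg (pow_nonneg hC _), abs_of_nonneg hCn, abs_of_pos hpos1, abs_of_pos hposx]
  rw [show (1:ℝ)/2 * (C^n/Real.Gamma x) = C^n/(2*Real.Gamma x) by ring,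
    div_le_div_iff₀ hpos1 (by positivity)]
  have k1 : C^n * (x*Real.Gamma x) ≤ C^n * Real.Gamma (x+a) :=
    mul_le_mul_of_nonneg_left (hG1 ▸ key) hCn
  have k3 : 0 ≤ C^n * Real.Gamma x * (x - 2*C) :=
    mul_nonneg (mul_nonneg hCn hposx.le) (by linarith)
  nlinarith [pow_succ C n]

lemma ML_continuous {a b : ℝ} (ha : 1 ≤ a) (hb : 0 < b) : Continuous (ML a b) := by
  rw [continuous_iff_continuousAt]
  intro x
  have hΓpos : ∀ n : ℕ, 0 < Real.Gamma (a * n + b) := by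
    intro n
    have h1 : (0:ℝ) ≤ a * n := by positivity
    exact Real.Gamma_pos_of_pos (by linarith)
  have hx : x ∈ Metric.ball (0:ℝ) (|x|+1) := by
    simp [Real.dist_eq, abs_of_nonneg]
  refine ContinuousOn.continuousAt ?_ (Metric.isOpen_ball.mem_nhds hx)
  unfold ML
  refine continuousOn_tsum (fun n => ((continuous_pow n).div_const _).continuousOn)
    (summable_aux ha hb (by positivity : (0:ℝ) ≤ |x|+1)) ?_
  intro n y hy
  rw [Real.norm_eq_abs, abs_div, abs_of_pos (hΓpos n), abs_pow]
  rw [div_le_div_iff_of_pos_right (hΓpos n)]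
  have hy' : |y| ≤ |x| + 1 := by
    simpa [Real.dist_eq] using (Metric.mem_ball.mp hy).le
  exact pow_le_pow_left₀ (abs_nonneg y) hy' n

noncomputable def gF (a lam t : ℝ) : ℝ :=
  ∑' n : ℕ, lam ^ n * t ^ (a * n + a - 1) / Real.Gamma (a * n + a)

lemma gF_eq {a : ℝ} (lam : ℝ) (ha : 1 < a) {t : ℝ} (ht : 0 < t) :
    t ^ (a - 1) * ML a a (lam * t ^ a) = gF a lam t := by
  unfold ML gF
  rw [← tsum_mul_left]
  congr 1; ext n
  rw [mul_pow, ← Real.rpow_natCast (t ^ a) n, ← Real.rpow_mul ht.le,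
    show a * n + a - 1 = a * n + (a - 1) by ring, Real.rpow_add ht]
  ring

lemma gF_deriv {a : ℝ} (lam : ℝ) (ha1 : 1 < a) (ha2 : a ≤ 2) {m : ℝ} (hm0 : 0 < m)
    (hm1 : m < 1) {t : ℝ} (ht : t ∈ Set.Ioo m 2) :
    HasDerivAt (gF a lam) (t ^ (a - 2) * ML a (a - 1) (lam * t ^ a)) t := by
  have hΓpos : ∀ c : ℝ, 0 < c → 0 < Real.Gamma c := fun c hc => Real.Gamma_pos_of_pos hc
  have hexp : ∀ n : ℕ, (0:ℝ) < a * n + a - 1 := by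
    intro n
    have h0 : (0:ℝ) ≤ a * n := by positivity
    linarith
  have hΓrec : ∀ n : ℕ, Real.Gamma (a * n + a) = (a * n + a - 1) * Real.Gamma (a * n + a - 1) := by
    intro n
    have h := Real.Gamma_add_one (hexp n).ne'
    rw [show a * (n:ℝ) + a - 1 + 1 = a * n + a by ring] at h
    exact h
  -- the bound sequence
  set K : ℝ := 2 ^ a * m ^ (-2:ℝ) with hK
  have hKpos : 0 < K := by positivity
  set u : ℕ → ℝ := fun n => (|lam| * 2 ^ a) ^ n / Real.Gamma (a * n + (a - 1)) * K with hu
  have hsum : Summable u := (summable_aux ha1.le (by linarith) (by positivity)).mul_right K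
  -- derivative formulas
  set f : ℕ → ℝ → ℝ := fun n y => lam ^ n * y ^ (a * n + a - 1) / Real.Gamma (a * n + a) with hf
  set f' : ℕ → ℝ → ℝ :=
    fun n y => lam ^ n * ((a * n + a - 1) * y ^ (a * n + a - 2)) / Real.Gamma (a * n + a) with hf'
  have hderiv : ∀ n : ℕ, ∀ y ∈ Set.Ioo m 2, HasDerivAt (f n) (f' n y) y := by
    intro n y hy
    have h0 : y ≠ 0 := by have := hy.1; intro h; rw [h] at this; linarith
    have := (Real.hasDerivAt_rpow_const (p := a * n + a - 1) (Or.inl h0)).const_mul (lam ^ n)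
    simpa [hf, hf', show a * (n:ℝ) + a - 1 - 1 = a * n + a - 2 by ring, mul_div_assoc]
      using this.div_const (Real.Gamma (a * n + a))
  have hbound : ∀ n : ℕ, ∀ y ∈ Set.Ioo m 2, ‖f' n y‖ ≤ u n := by
    intro n y hy
    have hy0 : 0 < y := lt_trans hm0 hy.1
    have hΓ' : 0 < Real.Gamma (a * n + a - 1) := hΓpos _ (hexp n)
    have hΓ : 0 < Real.Gamma (a * n + a) := by
      rw [hΓrec n]; exact mul_pos (hexp n) hΓ'
    have habs : ‖f' n y‖ =
        |lam| ^ n * ((a * n + a - 1) * y ^ (a * n + a - 2)) / Real.Gamma (a * n + a) := by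
      rw [hf', Real.norm_eq_abs, abs_div, abs_mul, abs_pow, abs_of_pos hΓ,
        abs_of_pos (mul_pos (hexp n) (Real.rpow_pos_of_pos hy0 _))]
    have hsimp : |lam| ^ n * ((a * n + a - 1) * y ^ (a * n + a - 2)) / Real.Gamma (a * n + a)
        = |lam| ^ n * y ^ (a * n + a - 2) / Real.Gamma (a * n + a - 1) := by
      rw [hΓrec n, show |lam| ^ n * ((a * n + a - 1) * y ^ (a * n + a - 2))
          = (a * n + a - 1) * (|lam| ^ n * y ^ (a * n + a - 2)) by ring,
        mul_div_mul_left _ _ (hexp n).ne']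
    have hpow2 : ((2:ℝ) ^ a) ^ n = (2:ℝ) ^ (a * n) := by
      rw [← Real.rpow_natCast ((2:ℝ) ^ a) n, ← Real.rpow_mul (by norm_num)]
    have h2 : y ^ (a * n + a) ≤ ((2:ℝ) ^ a) ^ n * (2:ℝ) ^ a := by
      have e : ((2:ℝ) ^ a) ^ n * (2:ℝ) ^ a = (2:ℝ) ^ (a * n + a) := by
        rw [hpow2, ← Real.rpow_add (by norm_num : (0:ℝ) < 2)]
      rw [e]
      have hexp0 : (0:ℝ) ≤ a * n + a := by
        have := hexp n; linarith
      exact Real.rpow_le_rpow hy0.le hy.2.le hexp0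
    have h3 : y ^ (-2:ℝ) ≤ m ^ (-2:ℝ) :=
      Real.rpow_le_rpow_of_nonpos hm0 hy.1.le (by norm_num)
    have h1 : y ^ (a * n + a - 2) = y ^ (a * n + a) * y ^ (-2:ℝ) := by
      rw [← Real.rpow_add hy0]; ring_nf
    have hyb : y ^ (a * n + a - 2) ≤ ((2:ℝ) ^ a) ^ n * ((2:ℝ) ^ a * m ^ (-2:ℝ)) := by
      rw [h1, show ((2:ℝ) ^ a) ^ n * ((2:ℝ) ^ a * m ^ (-2:ℝ))
          = (((2:ℝ) ^ a) ^ n * (2:ℝ) ^ a) * m ^ (-2:ℝ) by ring]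
      exact mul_le_mul h2 h3 (Real.rpow_pos_of_pos hy0 _).le (by positivity)
    rw [habs, hsimp]
    calc |lam| ^ n * y ^ (a * n + a - 2) / Real.Gamma (a * n + a - 1)
        ≤ |lam| ^ n * (((2:ℝ) ^ a) ^ n * ((2:ℝ) ^ a * m ^ (-2:ℝ))) / Real.Gamma (a * n + a - 1) := by
          gcongr
      _ = u n := by
          rw [hu]
          simp only
          rw [mul_pow, hK, show a * (n:ℝ) + (a - 1) = a * n + a - 1 by ring]
          ring
  have hg0 : Summable fun n => f n t := by
    have ht0 : 0 < t := lt_trans hm0 ht.1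
    refine Summable.of_norm_bounded
      (g := fun n : ℕ => (|lam| * 2 ^ a) ^ n / Real.Gamma (a * n + a) * (2:ℝ) ^ a)
      ((summable_aux ha1.le (by linarith) (by positivity)).mul_right _) ?_
    intro n
    have hΓ : 0 < Real.Gamma (a * n + a) := by
      rw [hΓrec n]; exact mul_pos (hexp n) (hΓpos _ (hexp n))
    have habs : ‖f n t‖ = |lam| ^ n * t ^ (a * n + a - 1) / Real.Gamma (a * n + a) := by
      rw [hf, Real.norm_eq_abs, abs_div, abs_mul, abs_pow, abs_of_pos hΓ,
        abs_of_pos (Real.rpow_pos_of_pos ht0 _)]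
    have hpow2 : ((2:ℝ) ^ a) ^ n = (2:ℝ) ^ (a * n) := by
      rw [← Real.rpow_natCast ((2:ℝ) ^ a) n, ← Real.rpow_mul (by norm_num)]
    have h2 : t ^ (a * n + a - 1) ≤ ((2:ℝ) ^ a) ^ n * (2:ℝ) ^ a := by
      have e : ((2:ℝ) ^ a) ^ n * (2:ℝ) ^ a = (2:ℝ) ^ (a * n + a) := by
        rw [hpow2, ← Real.rpow_add (by norm_num : (0:ℝ) < 2)]
      rw [e]
      calc t ^ (a * n + a - 1) ≤ (2:ℝ) ^ (a * n + a - 1) :=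
            Real.rpow_le_rpow ht0.le ht.2.le (hexp n).le
        _ ≤ (2:ℝ) ^ (a * n + a) :=
            Real.rpow_le_rpow_of_exponent_le (by norm_num) (by linarith)
    rw [habs]
    calc |lam| ^ n * t ^ (a * n + a - 1) / Real.Gamma (a * n + a)
        ≤ |lam| ^ n * (((2:ℝ) ^ a) ^ n * (2:ℝ) ^ a) / Real.Gamma (a * n + a) := by
          gcongr
      _ = (|lam| * 2 ^ a) ^ n / Real.Gamma (a * n + a) * (2:ℝ) ^ a := by
          rw [mul_pow]; ring
  have H := hasDerivAt_tsum_of_isPreconnected hsum isOpen_Ioo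
    (isPreconnected_Ioo) hderiv hbound ht hg0 ht
  have hval : (∑' n, f' n t) = t ^ (a - 2) * ML a (a - 1) (lam * t ^ a) := by
    have ht0 : 0 < t := lt_trans hm0 ht.1
    unfold ML
    rw [← tsum_mul_left]
    congr 1; ext n
    simp only [hf']
    rw [mul_pow, ← Real.rpow_natCast (t ^ a) n, ← Real.rpow_mul ht0.le, hΓrec n,
      show a * (n:ℝ) + (a - 1) = a * n + a - 1 by ring,
      show a * (n:ℝ) + a - 2 = (a - 2) + a * n by ring, Real.rpow_add ht0]
    rw [show lam ^ n * ((a * n + a - 1) * (t ^ (a - 2) * t ^ (a * (n:ℝ))))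
        = (a * n + a - 1) * (lam ^ n * (t ^ (a - 2) * t ^ (a * (n:ℝ)))) by ring,
      mul_div_mul_left _ _ (hexp n).ne']
    ring
  rw [hval] at H
  exact H

/-- Continuity of the Green's function on `[0,1] × [0,1)` and the boundary identities
`G(0,s) = 0`, `G(t,0) = 0` and `(∂G/∂t)(1,s) = 0`. -/
theorem stmt4 (α lam : ℝ) (hα1 : 1 < α) (hα2 : α ≤ 2) (hML : ML α (α - 1) lam ≠ 0) :
    ContinuousOn (fun p : ℝ × ℝ => greenG α lam p.1 p.2) (Set.Icc 0 1 ×ˢ Set.Ico 0 1) ∧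
    (∀ s ∈ Set.Ico (0:ℝ) 1, greenG α lam 0 s = 0) ∧
    (∀ t ∈ Set.Icc (0:ℝ) 1, greenG α lam t 0 = 0) ∧
    (∀ s ∈ Set.Ico (0:ℝ) 1, deriv (fun t => greenG α lam t s) 1 = 0) := by
  have hML1 : Continuous (ML α α) := ML_continuous hα1.le (by linarith)
  have hML2 : Continuous (ML α (α - 1)) := ML_continuous hα1.le (by linarith)
  have hcr : ∀ q : ℝ, 0 ≤ q → Continuous fun x : ℝ => x ^ q := fun q hq =>
    continuous_iff_continuousAt.mpr fun x => Real.continuousAt_rpow_const x q (Or.inr hq)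
  refine ⟨?_, ?_, ?_, ?_⟩
  · -- continuity
    have hnum : Continuous (fun p : ℝ × ℝ =>
        p.1 ^ (α - 1) * ML α α (lam * p.1 ^ α) * ML α (α - 1) (lam * (1 - p.2) ^ α)) := by
      refine (((hcr _ (by linarith)).comp continuous_fst).mul
        (hML1.comp (continuous_const.mul ((hcr _ (by linarith)).comp continuous_fst)))).mul
        (hML2.comp (continuous_const.mul ((hcr _ (by linarith)).comp
          (continuous_const.sub continuous_snd))))
    have hden : Continuous (fun p : ℝ × ℝ => (1 - p.2) ^ (2 - α) * ML α (α - 1) lam) :=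
      (((hcr _ (by linarith)).comp (continuous_const.sub continuous_snd))).mul continuous_const
    have hsec : Continuous (fun p : ℝ × ℝ =>
        max (p.1 - p.2) 0 ^ (α - 1) * ML α α (lam * max (p.1 - p.2) 0 ^ α)) := by
      have hmx : Continuous (fun p : ℝ × ℝ => max (p.1 - p.2) 0) :=
        (continuous_fst.sub continuous_snd).max continuous_const
      exact ((hcr _ (by linarith)).comp hmx).mul
        (hML1.comp (continuous_const.mul ((hcr _ (by linarith)).comp hmx)))
    have hN : ContinuousOn (fun p : ℝ × ℝ =>
        p.1 ^ (α - 1) * ML α α (lam * p.1 ^ α) * ML α (α - 1) (lam * (1 - p.2) ^ α) /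
          ((1 - p.2) ^ (2 - α) * ML α (α - 1) lam) -
        max (p.1 - p.2) 0 ^ (α - 1) * ML α α (lam * max (p.1 - p.2) 0 ^ α))
        (Set.Icc 0 1 ×ˢ Set.Ico 0 1) := by
      refine ((hnum.continuousOn.div hden.continuousOn ?_).sub hsec.continuousOn)
      rintro ⟨t, s⟩ ⟨_, hs0, hs1⟩
      exact mul_ne_zero (Real.rpow_pos_of_pos (by linarith) _).ne' hML
    refine hN.congr ?_
    rintro ⟨t, s⟩ ⟨⟨ht0, ht1⟩, hs0, hs1⟩
    simp only [greenG]
    by_cases hc : s ≤ t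
    · rw [if_pos hc, max_eq_left (by linarith)]
    · rw [if_neg hc, max_eq_right (by linarith [lt_of_not_ge hc]),
        Real.zero_rpow (by linarith : α - 1 ≠ 0), zero_mul, sub_zero]
  · -- G(0,s)=0
    intro s hs
    simp only [greenG]
    split_ifs with h
    · have hs0 : s = 0 := le_antisymm h hs.1
      subst hs0
      simp [Real.zero_rpow (show α - 1 ≠ 0 by linarith)]
    · simp [Real.zero_rpow (show α - 1 ≠ 0 by linarith)]
  · -- G(t,0)=0
    intro t ht
    simp only [greenG, if_pos ht.1, sub_zero]
    rw [Real.one_rpow, Real.one_rpow, mul_one, one_mul,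
      mul_div_assoc, div_self hML, mul_one, sub_self]
  · -- derivative at 1
    intro s hs
    obtain ⟨hs0, hs1⟩ := hs
    have h1s : 0 < 1 - s := by linarith
    set m := (1 - s) / 2 with hm
    have hm0 : 0 < m := by positivity
    have hm1 : m < 1 := by rw [hm]; linarith
    have h1mem : (1:ℝ) ∈ Set.Ioo m 2 := ⟨by rw [hm]; linarith, by norm_num⟩
    have h1smem : (1 - s) ∈ Set.Ioo m 2 := ⟨by rw [hm]; linarith, by linarith⟩
    set Cs := ML α (α - 1) (lam * (1 - s) ^ α) / ((1 - s) ^ (2 - α) * ML α (α - 1) lam) with hCs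
    have hev : (fun t => greenG α lam t s) =ᶠ[𝓝 1]
        fun t => gF α lam t * Cs - gF α lam (t - s) := by
      filter_upwards [Ioo_mem_nhds (show (1 + s) / 2 < 1 by linarith)
        (show (1:ℝ) < 2 by norm_num)] with t ht
      obtain ⟨ht1, ht2⟩ := ht
      have hts : s ≤ t := by linarith
      have ht0 : 0 < t := by linarith
      simp only [greenG, if_pos hts]
      rw [hCs, ← gF_eq lam hα1 ht0, ← gF_eq lam hα1 (show (0:ℝ) < t - s by linarith),
        mul_div_assoc]
    have hd1 : HasDerivAt (gF α lam) ((1:ℝ) ^ (α - 2) * ML α (α - 1) (lam * 1 ^ α)) 1 :=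
      gF_deriv lam hα1 hα2 hm0 hm1 h1mem
    have hd2 : HasDerivAt (gF α lam)
        ((1 - s) ^ (α - 2) * ML α (α - 1) (lam * (1 - s) ^ α)) (1 - s) :=
      gF_deriv lam hα1 hα2 hm0 hm1 h1smem
    have hd3 : HasDerivAt (fun t => gF α lam (t - s))
        ((1 - s) ^ (α - 2) * ML α (α - 1) (lam * (1 - s) ^ α) * 1) 1 :=
      by simpa [Function.comp_def] using HasDerivAt.comp 1 (by simpa using hd2) ((hasDerivAt_id 1).sub_const s)
    have hD : HasDerivAt (fun t => gF α lam t * Cs - gF α lam (t - s))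
        ((1:ℝ) ^ (α - 2) * ML α (α - 1) (lam * 1 ^ α) * Cs -
          (1 - s) ^ (α - 2) * ML α (α - 1) (lam * (1 - s) ^ α) * 1) 1 :=
      (hd1.mul_const Cs).sub hd3
    rw [hev.deriv_eq, hD.deriv]
    have hP : (0:ℝ) < (1 - s) ^ (2 - α) := Real.rpow_pos_of_pos h1s _
    have hinv : (1 - s) ^ (α - 2) = ((1 - s) ^ (2 - α))⁻¹ := by
      rw [show α - 2 = -(2 - α) by ring, Real.rpow_neg h1s.le]
    rw [hCs, hinv]
    simp only [Real.one_rpow, one_mul, mul_one]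
    field_simp
    ring
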